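/- Let n ≥ 2 and equip P_n^B with the product I ·_B J := the least B_n-partition K with I ≤ K and J ≤ K (which exists). Then there is a bijection F from the monoid presented by generators e_{i,j} (i < j in [±n]) subject to the relations (PB1) e_{i,j}·e_{i,j} = e_{i,j}; (PB2) e_{i,j}·e_{r,s} = e_{r,s}·e_{i,j}; (PB3) e_{i,j}·e_{j,k} = e_{i,j}·e_{i,k} = e_{i,k}·e_{j,k} for i < j < k in [±n]; (PB4) e_{−i,i}·e_{−j,j} = e_{−i,j}·e_{i,j} for 1 ≤ i < j ≤ n; (PB5) e_{i,j} = e_{−j,−i}, onto P_n^B, such that F maps the identity to ⊥, F maps the class of e_{i,j} to ε_{i,j}, and F(x·y) = F(x) ·_B F(y) for all x, y. -/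

import Mathlib

instance setoidCommMonoid (α : Type*) : CommMonoid (Setoid α) where
  mul := (· ⊔ ·)
  one := ⊥
  mul_assoc := sup_assoc
  one_mul := bot_sup_eq
  mul_one := sup_bot_eq
  mul_comm := sup_comm

def muSet {α : Type*} (X : Set α) : Setoid α :=
  Relation.EqvGen.setoid (fun x y => x ∈ X ∧ y ∈ X)

def mu {α : Type*} (i j : α) : Setoid α := muSet {i, j}

/-- `[±n]`: nonzero integers of absolute value at most `n`, with the order from `ℤ`. -/
abbrev PM (n : ℕ) := {k : ℤ // k ≠ 0 ∧ |k| ≤ (n : ℤ)}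

namespace PM

/-- The negation involution `k ↦ -k` on `[±n]`. -/
def neg {n : ℕ} (x : PM n) : PM n :=
  ⟨-x.1, by obtain ⟨h1, h2⟩ := x.2; exact ⟨neg_ne_zero.mpr h1, by rwa [abs_neg]⟩⟩

@[simp] theorem neg_neg {n : ℕ} (x : PM n) : x.neg.neg = x := Subtype.ext (by simp [neg])

theorem neg_lt_neg {n : ℕ} {x y : PM n} (h : x < y) : y.neg < x.neg := by
  have h' : x.1 < y.1 := Subtype.coe_lt_coe.mpr h
  rw [← Subtype.coe_lt_coe]
  show -y.1 < -x.1
  omega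

theorem neg_lt_pos {n : ℕ} {x y : PM n} (hx : 0 < x.1) (hy : 0 < y.1) : x.neg < y := by
  rw [← Subtype.coe_lt_coe]
  show -x.1 < y.1
  omega

theorem pos_ne_neg {n : ℕ} {x y : PM n} (hx : 0 < x.1) (hy : 0 < y.1) : y ≠ x.neg := by
  intro h
  have : y.1 = -x.1 := congrArg Subtype.val h
  omega

theorem neg_lt_self {n : ℕ} {x : PM n} (hx : 0 < x.1) : x.neg < x := neg_lt_pos hx hx

/-- The absolute value map `x ↦ |x|` from `[±n]` to its positive part. -/
def abs {n : ℕ} (x : PM n) : PM n :=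
  ⟨|x.1|, by obtain ⟨h1, h2⟩ := x.2; exact ⟨abs_ne_zero.mpr h1, by rwa [abs_abs]⟩⟩

end PM

/-- Image of a subset of `[±n]` under negation. -/
def negSet {n : ℕ} (K : Set (PM n)) : Set (PM n) := PM.neg '' K

/-- The partition `I⁻` transported along negation: `x ∼ y` in `negPart I` iff `-x ∼ -y` in `I`. -/
def negPart {n : ℕ} (I : Setoid (PM n)) : Setoid (PM n) := Setoid.comap PM.neg I

/-- A set partition `I` of `[±n]` is *signed* if for every block `K` of `I` the set `-K` is
also a block; equivalently, `x ∼ y ↔ -x ∼ -y` for all `x, y`. -/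
def IsSigned {n : ℕ} (I : Setoid (PM n)) : Prop :=
  ∀ x y : PM n, I x y ↔ I (PM.neg x) (PM.neg y)

/-- A *zero block* of a partition `I` is a block `K` with `-K = K`. -/
def IsZeroBlock {n : ℕ} (I : Setoid (PM n)) (K : Set (PM n)) : Prop :=
  K ∈ I.classes ∧ negSet K = K

/-- A `Bₙ`-partition: a signed partition of `[±n]` with at most one zero block. -/
def IsBPart {n : ℕ} (I : Setoid (PM n)) : Prop :=
  IsSigned I ∧ Set.Subsingleton {K | IsZeroBlock I K}

/-- A *restricted* signed partition: all its zero blocks have more than two elements. -/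
def IsRestricted {n : ℕ} (I : Setoid (PM n)) : Prop :=
  IsSigned I ∧ ∀ K : Set (PM n), IsZeroBlock I K → 2 < K.ncard

/-- A `Dₙ`-partition: a `Bₙ`-partition whose zero block (if present) has more than two
elements. -/
def IsDPart {n : ℕ} (I : Setoid (PM n)) : Prop :=
  IsBPart I ∧ ∀ K : Set (PM n), IsZeroBlock I K → 2 < K.ncard

/-- For `i < j` in `[±n]`, the signed partition `ε_{i,j} = μ_{-j,-i} ⊔ μ_{i,j}`. -/
def eps {n : ℕ} (i j : PM n) : Setoid (PM n) := mu (PM.neg j) (PM.neg i) ⊔ mu i j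

/-- Generators `e_{i,j}` for `i < j` in `[±n]`. -/
abbrev BGen (n : ℕ) := {p : PM n × PM n // p.1 < p.2}

open FreeMonoid in
/-- The defining relations (PB1)–(PB5) of the monoid of `Bₙ`-partitions. -/
inductive BRel (n : ℕ) : FreeMonoid (BGen n) → FreeMonoid (BGen n) → Prop
  /-- (PB1) `e_{i,j} e_{i,j} = e_{i,j}`. -/
  | PB1 (a : BGen n) : BRel n (of a * of a) (of a)
  /-- (PB2) `e_{i,j} e_{r,s} = e_{r,s} e_{i,j}`. -/
  | PB2 (a b : BGen n) : BRel n (of a * of b) (of b * of a)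
  /-- (PB3), first equality: `e_{i,j} e_{j,k} = e_{i,j} e_{i,k}` for `i < j < k`. -/
  | PB3a (i j k : PM n) (hij : i < j) (hjk : j < k) :
      BRel n (of ⟨(i, j), hij⟩ * of ⟨(j, k), hjk⟩)
        (of ⟨(i, j), hij⟩ * of ⟨(i, k), hij.trans hjk⟩)
  /-- (PB3), second equality: `e_{i,j} e_{j,k} = e_{i,k} e_{j,k}` for `i < j < k`. -/
  | PB3b (i j k : PM n) (hij : i < j) (hjk : j < k) :
      BRel n (of ⟨(i, j), hij⟩ * of ⟨(j, k), hjk⟩)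
        (of ⟨(i, k), hij.trans hjk⟩ * of ⟨(j, k), hjk⟩)
  /-- (PB4) `e_{-i,i} e_{-j,j} = e_{-i,j} e_{i,j}` for positive `i < j`. -/
  | PB4 (i j : PM n) (hi : 0 < i.1) (hj : 0 < j.1) (hij : i < j) :
      BRel n (of ⟨(PM.neg i, i), PM.neg_lt_self hi⟩ * of ⟨(PM.neg j, j), PM.neg_lt_self hj⟩)
        (of ⟨(PM.neg i, j), PM.neg_lt_pos hi hj⟩ * of ⟨(i, j), hij⟩)
  /-- (PB5) `e_{i,j} = e_{-j,-i}`. -/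
  | PB5 (i j : PM n) (hij : i < j) :
      BRel n (of ⟨(i, j), hij⟩) (of ⟨(PM.neg j, PM.neg i), PM.neg_lt_neg hij⟩)


/-! ### Auxiliary development -/

section Aux

theorem setoid_mul_def {α : Type*} (I J : Setoid α) : I * J = I ⊔ J := rfl

theorem muSet_iff {α : Type*} (X : Set α) (x y : α) :
    muSet X x y ↔ x = y ∨ (x ∈ X ∧ y ∈ X) := by
  constructor
  · intro h
    have h' : Relation.EqvGen (fun a b => a ∈ X ∧ b ∈ X) x y := h
    clear h
    induction h' with
    | rel a b hab => exact Or.inr hab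
    | refl a => exact Or.inl rfl
    | symm a b _ ih =>
        rcases ih with h | h
        · exact Or.inl h.symm
        · exact Or.inr ⟨h.2, h.1⟩
    | trans a b c _ _ ih1 ih2 =>
        rcases ih1 with rfl | h1
        · exact ih2
        · rcases ih2 with rfl | h2
          · exact Or.inr h1
          · exact Or.inr ⟨h1.1, h2.2⟩
  · rintro (rfl | h)
    · exact (muSet X).refl' x
    · exact Relation.EqvGen.rel _ _ h

theorem muSet_le {α : Type*} {X : Set α} {K : Setoid α}
    (h : ∀ x ∈ X, ∀ y ∈ X, K x y) : muSet X ≤ K :=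
  Setoid.eqvGen_le fun x y hxy => h x hxy.1 y hxy.2

theorem mu_rel_self {α : Type*} (i j : α) : mu i j i j :=
  Relation.EqvGen.rel _ _ ⟨by simp, by simp⟩

theorem mu_le_iff {α : Type*} {i j : α} {K : Setoid α} : mu i j ≤ K ↔ K i j := by
  constructor
  · intro h
    exact Setoid.le_def.mp h (mu_rel_self i j)
  · intro h
    refine muSet_le ?_
    intro x hx y hy
    simp only [Set.mem_insert_iff, Set.mem_singleton_iff] at hx hy
    rcases hx with rfl | rfl <;> rcases hy with rfl | rfl
    · exact K.refl' _
    · exact h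
    · exact K.symm' h
    · exact K.refl' _

theorem mu_iff {α : Type*} (i j x y : α) :
    mu i j x y ↔ x = y ∨ ((x = i ∨ x = j) ∧ (y = i ∨ y = j)) := by
  rw [show mu i j = muSet {i, j} from rfl, muSet_iff]
  simp only [Set.mem_insert_iff, Set.mem_singleton_iff]

theorem mu_comm {α : Type*} (i j : α) : mu i j = mu j i := by
  unfold mu
  rw [Set.pair_comm]

namespace PM

variable {n : ℕ}

theorem neg_injective : Function.Injective (neg : PM n → PM n) := fun x y h => by
  rw [← neg_neg x, h, neg_neg]

theorem neg_ne_self (x : PM n) : neg x ≠ x := by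
  intro h
  have h1 : -x.1 = x.1 := congrArg Subtype.val h
  have h2 := x.2.1
  omega

theorem neg_eq_iff {x z : PM n} : neg x = z ↔ x = neg z :=
  ⟨fun h => by rw [← h, neg_neg], fun h => by rw [h, neg_neg]⟩

theorem abs_val (x : PM n) : (abs x).1 = |x.1| := rfl

theorem abs_pos' (x : PM n) : 0 < (abs x).1 := by
  have := x.2.1
  simp only [abs_val]
  exact abs_pos.mpr this

end PM

section SetoidPM

variable {n : ℕ}

theorem negPart_rel (I : Setoid (PM n)) (x y : PM n) :
    negPart I x y ↔ I (PM.neg x) (PM.neg y) := Iff.rfl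

theorem isSigned_iff_negPart {I : Setoid (PM n)} : IsSigned I ↔ negPart I = I := by
  constructor
  · intro h
    exact Setoid.ext fun x y => (h x y).symm
  · intro h
    have h2 : ∀ a b : PM n, negPart I a b ↔ I a b := fun a b => by rw [h]
    exact fun x y => (h2 x y).symm

theorem negPart_negPart (I : Setoid (PM n)) : negPart (negPart I) = I :=
  Setoid.ext fun x y => by
    rw [negPart_rel, negPart_rel, PM.neg_neg, PM.neg_neg]

theorem negPart_mono {I J : Setoid (PM n)} (h : I ≤ J) : negPart I ≤ negPart J :=
  Setoid.le_def.mpr fun hxy => Setoid.le_def.mp h hxy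

theorem negPart_sup (I J : Setoid (PM n)) : negPart (I ⊔ J) = negPart I ⊔ negPart J := by
  apply le_antisymm
  · have h : I ⊔ J ≤ negPart (negPart I ⊔ negPart J) := by
      apply sup_le
      · conv_lhs => rw [← negPart_negPart I]
        exact negPart_mono le_sup_left
      · conv_lhs => rw [← negPart_negPart J]
        exact negPart_mono le_sup_right
    have h2 := negPart_mono h
    rwa [negPart_negPart] at h2
  · exact sup_le (negPart_mono le_sup_left) (negPart_mono le_sup_right)

theorem negPart_mu (a b : PM n) : negPart (mu a b) = mu (PM.neg a) (PM.neg b) := by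
  apply Setoid.ext
  intro x y
  rw [negPart_rel, mu_iff, mu_iff]
  simp only [PM.neg_eq_iff]
  constructor
  · rintro (h | ⟨h1, h2⟩)
    · exact Or.inl (by rw [h, PM.neg_neg])
    · exact Or.inr ⟨h1, h2⟩
  · rintro (rfl | ⟨h1, h2⟩)
    · exact Or.inl (by rw [PM.neg_neg])
    · exact Or.inr ⟨h1, h2⟩

theorem eps_rel_self (i j : PM n) : eps i j i j :=
  Setoid.le_def.mp (le_sup_right : mu i j ≤ eps i j) (mu_rel_self i j)

theorem eps_rel_neg (i j : PM n) : eps i j (PM.neg i) (PM.neg j) :=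
  (eps i j).symm'
    (Setoid.le_def.mp (le_sup_left : mu (PM.neg j) (PM.neg i) ≤ eps i j)
      (mu_rel_self (PM.neg j) (PM.neg i)))

theorem eps_le_iff {i j : PM n} {K : Setoid (PM n)} :
    eps i j ≤ K ↔ K i j ∧ K (PM.neg i) (PM.neg j) := by
  constructor
  · intro h
    exact ⟨Setoid.le_def.mp h (eps_rel_self i j), Setoid.le_def.mp h (eps_rel_neg i j)⟩
  · rintro ⟨h1, h2⟩
    exact sup_le (mu_le_iff.mpr (K.symm' h2)) (mu_le_iff.mpr h1)

theorem isSigned_eps (i j : PM n) : IsSigned (eps i j) := by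
  rw [isSigned_iff_negPart]
  show negPart (mu (PM.neg j) (PM.neg i) ⊔ mu i j) = _
  rw [negPart_sup, negPart_mu, negPart_mu, PM.neg_neg, PM.neg_neg,
    mu_comm j i, mu_comm (PM.neg i) (PM.neg j), sup_comm]
  rfl

theorem isSigned_bot : IsSigned (⊥ : Setoid (PM n)) := by
  intro x y
  simp only [Setoid.bot_def]
  exact ⟨fun h => by rw [h], fun h => PM.neg_injective h⟩

theorem isSigned_sup {I J : Setoid (PM n)} (hI : IsSigned I) (hJ : IsSigned J) :
    IsSigned (I ⊔ J) := by
  rw [isSigned_iff_negPart] at *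
  rw [negPart_sup, hI, hJ]

/-- Full characterization of the relation `eps i j`. -/
theorem eps_iff {i j : PM n} (hij : i ≠ j) (x y : PM n) :
    eps i j x y ↔ x = y ∨ ((x = i ∨ x = j) ∧ (y = i ∨ y = j)) ∨
      ((x = PM.neg i ∨ x = PM.neg j) ∧ (y = PM.neg i ∨ y = PM.neg j)) := by
  have hmerge : ∀ z : PM n, (z = i ∨ z = j) → (z = PM.neg i ∨ z = PM.neg j) →
      PM.neg i = j := by
    rintro z (h1 | h1) (h2 | h2)
    · exact absurd (h2.symm.trans h1) (PM.neg_ne_self i)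
    · rw [h1.symm.trans h2, PM.neg_neg]
    · exact (h2.symm.trans h1)
    · exact absurd (h2.symm.trans h1) (PM.neg_ne_self j)
  constructor
  · intro h
    have h0 : (mu (PM.neg j) (PM.neg i) ⊔ mu i j) x y := h
    rw [Setoid.sup_eq_eqvGen] at h0
    have h' : Relation.EqvGen (fun a b => mu (PM.neg j) (PM.neg i) a b ∨ mu i j a b) x y := h0
    clear h h0
    induction h' with
    | rel a b hab =>
        rcases hab with h | h
        · rw [mu_iff] at h
          rcases h with rfl | ⟨h1, h2⟩
          · exact Or.inl rfl
          · exact Or.inr (Or.inr ⟨h1.symm, h2.symm⟩)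
        · rw [mu_iff] at h
          rcases h with rfl | ⟨h1, h2⟩
          · exact Or.inl rfl
          · exact Or.inr (Or.inl ⟨h1, h2⟩)
    | refl a => exact Or.inl rfl
    | symm a b _ ih =>
        rcases ih with rfl | ⟨h1, h2⟩ | ⟨h1, h2⟩
        · exact Or.inl rfl
        · exact Or.inr (Or.inl ⟨h2, h1⟩)
        · exact Or.inr (Or.inr ⟨h2, h1⟩)
    | trans a b c _ _ ih1 ih2 =>
        rcases ih1 with rfl | ⟨h1, h2⟩ | ⟨h1, h2⟩
        · exact ih2
        · rcases ih2 with rfl | ⟨h3, h4⟩ | ⟨h3, h4⟩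
          · exact Or.inr (Or.inl ⟨h1, h2⟩)
          · exact Or.inr (Or.inl ⟨h1, h4⟩)
          · have hk := hmerge b h2 h3
            have hk' : PM.neg j = i := by rw [← hk, PM.neg_neg]
            rw [hk, hk'] at h4
            exact Or.inr (Or.inl ⟨h1, h4.symm⟩)
        · rcases ih2 with rfl | ⟨h3, h4⟩ | ⟨h3, h4⟩
          · exact Or.inr (Or.inr ⟨h1, h2⟩)
          · have hk := hmerge b h3 h2
            have hk' : PM.neg j = i := by rw [← hk, PM.neg_neg]
            rcases h4 with rfl | rfl
            · exact Or.inr (Or.inr ⟨h1, Or.inr hk'.symm⟩)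
            · exact Or.inr (Or.inr ⟨h1, Or.inl hk.symm⟩)
          · exact Or.inr (Or.inr ⟨h1, h4⟩)
  · rintro (rfl | ⟨h1, h2⟩ | ⟨h1, h2⟩)
    · exact (eps i j).refl' x
    · have h0 := eps_rel_self i j
      rcases h1 with rfl | rfl <;> rcases h2 with rfl | rfl
      · exact (eps _ _).refl' _
      · exact h0
      · exact (eps _ _).symm' h0
      · exact (eps _ _).refl' _
    · have h0 := eps_rel_neg i j
      rcases h1 with rfl | rfl <;> rcases h2 with rfl | rfl
      · exact (eps _ _).refl' _
      · exact h0
      · exact (eps _ _).symm' h0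
      · exact (eps _ _).refl' _

end SetoidPM

end Aux


section Zero

variable {n : ℕ}

theorem isZeroBlock_iff {I : Setoid (PM n)} (hI : IsSigned I) (K : Set (PM n)) :
    IsZeroBlock I K ↔ ∃ x, I x (PM.neg x) ∧ K = {y | I x y} := by
  constructor
  · rintro ⟨⟨y, rfl⟩, hneg⟩
    have hy : y ∈ {x | I x y} := I.refl' y
    have hny : PM.neg y ∈ negSet {x | I x y} := ⟨y, hy, rfl⟩
    rw [hneg] at hny
    refine ⟨y, I.symm' hny, ?_⟩
    ext z
    simp only [Set.mem_setOf_eq]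
    exact ⟨fun h => I.symm' h, fun h => I.symm' h⟩
  · rintro ⟨x, hx, rfl⟩
    constructor
    · refine ⟨x, ?_⟩
      ext z
      simp only [Set.mem_setOf_eq]
      exact ⟨fun h => I.symm' h, fun h => I.symm' h⟩
    · ext z
      constructor
      · rintro ⟨w, hw, rfl⟩
        exact I.trans' hx ((hI x w).mp hw)
      · intro hz
        exact ⟨PM.neg z, I.trans' hx ((hI x z).mp hz), PM.neg_neg z⟩

/-- At most one zero block, as a relation property. -/
def ZProp {n : ℕ} (I : Setoid (PM n)) : Prop :=
  ∀ x y, I x (PM.neg x) → I y (PM.neg y) → I x y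

theorem subsingleton_zero_iff {I : Setoid (PM n)} (hI : IsSigned I) :
    Set.Subsingleton {K | IsZeroBlock I K} ↔ ZProp I := by
  constructor
  · intro h x y hx hy
    have h1 : IsZeroBlock I {z | I x z} := (isZeroBlock_iff hI _).mpr ⟨x, hx, rfl⟩
    have h2 : IsZeroBlock I {z | I y z} := (isZeroBlock_iff hI _).mpr ⟨y, hy, rfl⟩
    have heq := h h1 h2
    have hmem : y ∈ {z | I y z} := I.refl' y
    rw [← heq] at hmem
    exact hmem
  · intro hz K1 hK1 K2 hK2
    obtain ⟨x, hx, rfl⟩ := (isZeroBlock_iff hI _).mp hK1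
    obtain ⟨y, hy, rfl⟩ := (isZeroBlock_iff hI _).mp hK2
    ext z
    simp only [Set.mem_setOf_eq]
    exact ⟨fun h => I.trans' (I.symm' (hz x y hx hy)) h,
      fun h => I.trans' (hz x y hx hy) h⟩

theorem isBPart_bot : IsBPart (⊥ : Setoid (PM n)) := by
  refine ⟨isSigned_bot, (subsingleton_zero_iff isSigned_bot).mpr ?_⟩
  intro x y hx hy
  exfalso
  simp only [Setoid.bot_def] at hx
  exact PM.neg_ne_self x hx.symm

theorem isBPart_eps {i j : PM n} (hij : i ≠ j) : IsBPart (eps i j) := by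
  refine ⟨isSigned_eps i j, (subsingleton_zero_iff (isSigned_eps i j)).mpr ?_⟩
  have key : ∀ z : PM n, eps i j z (PM.neg z) → (z = i ∨ z = j) := by
    intro z hz
    rw [eps_iff hij] at hz
    rcases hz with h | ⟨hz1, hz2⟩ | ⟨hz1, hz2⟩
    · exact absurd h.symm (PM.neg_ne_self z)
    · exact hz1
    · rcases hz2 with h2 | h2
      · exact Or.inl (PM.neg_injective h2)
      · exact Or.inr (PM.neg_injective h2)
  intro x y hx hy
  rw [eps_iff hij]
  exact Or.inr (Or.inl ⟨key x hx, key y hy⟩)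

end Zero
section BcloseSec

variable {n : ℕ}

/-- Base relation for the `B`-closure: also relate any two "self-negative" points. -/
def BRelc (I : Setoid (PM n)) : PM n → PM n → Prop :=
  fun x y => I x y ∨ (I x (PM.neg x) ∧ I y (PM.neg y))

/-- The least `Bₙ`-partition above a signed partition. -/
def Bclose (I : Setoid (PM n)) : Setoid (PM n) := Relation.EqvGen.setoid (BRelc I)

theorem le_Bclose (I : Setoid (PM n)) : I ≤ Bclose I :=
  Setoid.le_def.mpr fun h => Relation.EqvGen.rel _ _ (Or.inl h)

theorem Bclose_le {I K : Setoid (PM n)} (hK : IsBPart K) (h : I ≤ K) : Bclose I ≤ K := by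
  apply Setoid.eqvGen_le
  rintro x y (hxy | ⟨h1, h2⟩)
  · exact Setoid.le_def.mp h hxy
  · exact (subsingleton_zero_iff hK.1).mp hK.2 x y (Setoid.le_def.mp h h1)
      (Setoid.le_def.mp h h2)

theorem Bclose_rel {I : Setoid (PM n)} (hI : IsSigned I) (x y : PM n) :
    Bclose I x y ↔ BRelc I x y := by
  constructor
  · intro h
    have h' : Relation.EqvGen (BRelc I) x y := h
    clear h
    induction h' with
    | rel a b hab => exact hab
    | refl a => exact Or.inl (I.refl' a)
    | symm a b _ ih =>
        rcases ih with h | ⟨h1, h2⟩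
        · exact Or.inl (I.symm' h)
        · exact Or.inr ⟨h2, h1⟩
    | trans a b c _ _ ih1 ih2 =>
        rcases ih1 with h1 | ⟨ha, hb⟩
        · rcases ih2 with h2 | ⟨hb, hc⟩
          · exact Or.inl (I.trans' h1 h2)
          · exact Or.inr ⟨I.trans' (I.trans' h1 hb) ((hI b a).mp (I.symm' h1)), hc⟩
        · rcases ih2 with h2 | ⟨hb', hc⟩
          · exact Or.inr ⟨ha, I.trans' (I.trans' (I.symm' h2) hb) ((hI b c).mp h2)⟩
          · exact Or.inr ⟨ha, hc⟩
  · exact Relation.EqvGen.rel x y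

theorem isSigned_Bclose {I : Setoid (PM n)} (hI : IsSigned I) : IsSigned (Bclose I) := by
  intro x y
  rw [Bclose_rel hI, Bclose_rel hI]
  unfold BRelc
  constructor
  · rintro (h | ⟨h1, h2⟩)
    · exact Or.inl ((hI x y).mp h)
    · exact Or.inr ⟨(hI x (PM.neg x)).mp h1, (hI y (PM.neg y)).mp h2⟩
  · rintro (h | ⟨h1, h2⟩)
    · exact Or.inl ((hI x y).mpr h)
    · exact Or.inr ⟨(hI x (PM.neg x)).mpr h1, (hI y (PM.neg y)).mpr h2⟩

theorem zprop_Bclose {I : Setoid (PM n)} (hI : IsSigned I) : ZProp (Bclose I) := by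
  intro x y hx hy
  rw [Bclose_rel hI] at hx hy
  have hx' : I x (PM.neg x) := by rcases hx with h | ⟨h, _⟩ <;> exact h
  have hy' : I y (PM.neg y) := by rcases hy with h | ⟨h, _⟩ <;> exact h
  exact Relation.EqvGen.rel _ _ (Or.inr ⟨hx', hy'⟩)

theorem isBPart_Bclose {I : Setoid (PM n)} (hI : IsSigned I) : IsBPart (Bclose I) :=
  ⟨isSigned_Bclose hI, (subsingleton_zero_iff (isSigned_Bclose hI)).mpr (zprop_Bclose hI)⟩

theorem Bclose_eq_self {I : Setoid (PM n)} (hI : IsBPart I) : Bclose I = I :=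
  le_antisymm (Bclose_le hI le_rfl) (le_Bclose I)

theorem Bclose_mono {I J : Setoid (PM n)} (h : I ≤ J) : Bclose I ≤ Bclose J := by
  apply Setoid.eqvGen_le
  rintro x y (hxy | ⟨h1, h2⟩)
  · exact Setoid.le_def.mp (le_Bclose J) (Setoid.le_def.mp h hxy)
  · exact Relation.EqvGen.rel _ _ (Or.inr ⟨Setoid.le_def.mp h h1, Setoid.le_def.mp h h2⟩)

theorem Bclose_sup_Bclose_right {X Y : Setoid (PM n)} (hX : IsSigned X) (hY : IsSigned Y) :
    Bclose (X ⊔ Bclose Y) = Bclose (X ⊔ Y) := by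
  apply le_antisymm
  · apply Bclose_le (isBPart_Bclose (isSigned_sup hX hY))
    apply sup_le
    · exact le_trans le_sup_left (le_Bclose _)
    · exact Bclose_mono le_sup_right
  · exact Bclose_mono (sup_le_sup_left (le_Bclose Y) X)

/-- The product of `Bₙ`-partitions. -/
def mulB (I J : Setoid (PM n)) : Setoid (PM n) := Bclose (I ⊔ J)

theorem mulB_isLeast {I J : Setoid (PM n)} (hI : IsBPart I) (hJ : IsBPart J) :
    IsLeast {K | IsBPart K ∧ I ≤ K ∧ J ≤ K} (mulB I J) := by
  have hs : IsSigned (I ⊔ J) := isSigned_sup hI.1 hJ.1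
  constructor
  · exact ⟨isBPart_Bclose hs, le_trans le_sup_left (le_Bclose _),
      le_trans le_sup_right (le_Bclose _)⟩
  · rintro K ⟨hK, h1, h2⟩
    exact Bclose_le hK (sup_le h1 h2)

theorem isBPart_mulB {I J : Setoid (PM n)} (hI : IsBPart I) (hJ : IsBPart J) :
    IsBPart (mulB I J) := (mulB_isLeast hI hJ).1.1

theorem mulB_isLeast₃l {I J L : Setoid (PM n)} (hI : IsBPart I) (hJ : IsBPart J)
    (hL : IsBPart L) :
    IsLeast {K | IsBPart K ∧ I ≤ K ∧ J ≤ K ∧ L ≤ K} (mulB (mulB I J) L) := by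
  constructor
  · refine ⟨isBPart_mulB (isBPart_mulB hI hJ) hL, ?_, ?_, ?_⟩
    · exact le_trans (mulB_isLeast hI hJ).1.2.1
        (mulB_isLeast (isBPart_mulB hI hJ) hL).1.2.1
    · exact le_trans (mulB_isLeast hI hJ).1.2.2
        (mulB_isLeast (isBPart_mulB hI hJ) hL).1.2.1
    · exact (mulB_isLeast (isBPart_mulB hI hJ) hL).1.2.2
  · rintro K ⟨hK, h1, h2, h3⟩
    exact (mulB_isLeast (isBPart_mulB hI hJ) hL).2
      ⟨hK, (mulB_isLeast hI hJ).2 ⟨hK, h1, h2⟩, h3⟩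

theorem mulB_isLeast₃r {I J L : Setoid (PM n)} (hI : IsBPart I) (hJ : IsBPart J)
    (hL : IsBPart L) :
    IsLeast {K | IsBPart K ∧ I ≤ K ∧ J ≤ K ∧ L ≤ K} (mulB I (mulB J L)) := by
  constructor
  · refine ⟨isBPart_mulB hI (isBPart_mulB hJ hL), ?_, ?_, ?_⟩
    · exact (mulB_isLeast hI (isBPart_mulB hJ hL)).1.2.1
    · exact le_trans (mulB_isLeast hJ hL).1.2.1
        (mulB_isLeast hI (isBPart_mulB hJ hL)).1.2.2
    · exact le_trans (mulB_isLeast hJ hL).1.2.2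
        (mulB_isLeast hI (isBPart_mulB hJ hL)).1.2.2
  · rintro K ⟨hK, h1, h2, h3⟩
    exact (mulB_isLeast hI (isBPart_mulB hJ hL)).2
      ⟨hK, h1, (mulB_isLeast hJ hL).2 ⟨hK, h2, h3⟩⟩

/-- The commutative monoid of `Bₙ`-partitions. -/
abbrev BP (n : ℕ) := {I : Setoid (PM n) // IsBPart I}

instance BPCommMonoid (n : ℕ) : CommMonoid (BP n) where
  mul I J := ⟨mulB I.1 J.1, isBPart_mulB I.2 J.2⟩
  one := ⟨⊥, isBPart_bot⟩
  mul_assoc I J L := Subtype.ext ((mulB_isLeast₃l I.2 J.2 L.2).unique (mulB_isLeast₃r I.2 J.2 L.2))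
  one_mul I := Subtype.ext (by
    show mulB ⊥ I.1 = I.1
    rw [mulB, bot_sup_eq, Bclose_eq_self I.2])
  mul_one I := Subtype.ext (by
    show mulB I.1 ⊥ = I.1
    rw [mulB, sup_bot_eq, Bclose_eq_self I.2])
  mul_comm I J := Subtype.ext (by
    show mulB I.1 J.1 = mulB J.1 I.1
    rw [mulB, mulB, sup_comm])

theorem BP_mul_val (I J : BP n) : (I * J).1 = mulB I.1 J.1 := rfl

theorem BP_one_val : ((1 : BP n) : Setoid (PM n)) = ⊥ := rfl

end BcloseSec
section Hom

variable {n : ℕ}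

/-- `eps` of a generator. -/
def epsG (a : BGen n) : Setoid (PM n) := eps a.1.1 a.1.2

/-- A generator's image as a `Bₙ`-partition. -/
def fBP (a : BGen n) : BP n := ⟨epsG a, isBPart_eps (ne_of_lt a.2)⟩

/-- The monoid homomorphism from words to plain set partitions (sup-product). -/
def Sword : FreeMonoid (BGen n) →* Setoid (PM n) := FreeMonoid.lift epsG

theorem Sword_one : Sword (1 : FreeMonoid (BGen n)) = ⊥ := map_one Sword

theorem Sword_cons (a : BGen n) (w : FreeMonoid (BGen n)) :
    Sword (FreeMonoid.of a * w) = epsG a ⊔ Sword w := by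
  rw [map_mul]
  rfl

theorem isSigned_Sword (w : FreeMonoid (BGen n)) : IsSigned (Sword w) := by
  induction w using FreeMonoid.inductionOn' with
  | one => rw [Sword_one]; exact isSigned_bot
  | of_mul a w ih => rw [Sword_cons]; exact isSigned_sup (isSigned_eps _ _) ih

theorem rels_hold : ∀ a b : FreeMonoid (BGen n), BRel n a b →
    FreeMonoid.lift (fBP (n := n)) a = FreeMonoid.lift fBP b := by
  intro a b h
  induction h with
  | PB1 a =>
      simp only [map_mul, FreeMonoid.lift_eval_of]
      apply Subtype.ext
      show mulB (epsG a) (epsG a) = epsG a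
      rw [mulB, sup_idem]
      exact Bclose_eq_self (isBPart_eps (ne_of_lt a.2))
  | PB2 a b =>
      simp only [map_mul, FreeMonoid.lift_eval_of]
      exact mul_comm _ _
  | PB3a i j k hij hjk =>
      simp only [map_mul, FreeMonoid.lift_eval_of]
      apply Subtype.ext
      show mulB (eps i j) (eps j k) = mulB (eps i j) (eps i k)
      have hBij := isBPart_eps (ne_of_lt hij)
      have hBjk := isBPart_eps (ne_of_lt hjk)
      have hBik := isBPart_eps (ne_of_lt (hij.trans hjk))
      apply le_antisymm
      · apply (mulB_isLeast hBij hBjk).2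
        refine ⟨isBPart_mulB hBij hBik, (mulB_isLeast hBij hBik).1.2.1, ?_⟩
        set K := mulB (eps i j) (eps i k) with hK
        obtain ⟨hij1, hij2⟩ := eps_le_iff.mp (mulB_isLeast hBij hBik).1.2.1
        obtain ⟨hik1, hik2⟩ := eps_le_iff.mp (mulB_isLeast hBij hBik).1.2.2
        exact eps_le_iff.mpr ⟨K.trans' (K.symm' hij1) hik1, K.trans' (K.symm' hij2) hik2⟩
      · apply (mulB_isLeast hBij hBik).2
        refine ⟨isBPart_mulB hBij hBjk, (mulB_isLeast hBij hBjk).1.2.1, ?_⟩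
        set K := mulB (eps i j) (eps j k) with hK
        obtain ⟨hij1, hij2⟩ := eps_le_iff.mp (mulB_isLeast hBij hBjk).1.2.1
        obtain ⟨hjk1, hjk2⟩ := eps_le_iff.mp (mulB_isLeast hBij hBjk).1.2.2
        exact eps_le_iff.mpr ⟨K.trans' hij1 hjk1, K.trans' hij2 hjk2⟩
  | PB3b i j k hij hjk =>
      simp only [map_mul, FreeMonoid.lift_eval_of]
      apply Subtype.ext
      show mulB (eps i j) (eps j k) = mulB (eps i k) (eps j k)
      have hBij := isBPart_eps (ne_of_lt hij)
      have hBjk := isBPart_eps (ne_of_lt hjk)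
      have hBik := isBPart_eps (ne_of_lt (hij.trans hjk))
      apply le_antisymm
      · apply (mulB_isLeast hBij hBjk).2
        refine ⟨isBPart_mulB hBik hBjk, ?_, (mulB_isLeast hBik hBjk).1.2.2⟩
        set K := mulB (eps i k) (eps j k) with hK
        obtain ⟨hik1, hik2⟩ := eps_le_iff.mp (mulB_isLeast hBik hBjk).1.2.1
        obtain ⟨hjk1, hjk2⟩ := eps_le_iff.mp (mulB_isLeast hBik hBjk).1.2.2
        exact eps_le_iff.mpr ⟨K.trans' hik1 (K.symm' hjk1), K.trans' hik2 (K.symm' hjk2)⟩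
      · apply (mulB_isLeast hBik hBjk).2
        refine ⟨isBPart_mulB hBij hBjk, ?_, (mulB_isLeast hBij hBjk).1.2.2⟩
        set K := mulB (eps i j) (eps j k) with hK
        obtain ⟨hij1, hij2⟩ := eps_le_iff.mp (mulB_isLeast hBij hBjk).1.2.1
        obtain ⟨hjk1, hjk2⟩ := eps_le_iff.mp (mulB_isLeast hBij hBjk).1.2.2
        exact eps_le_iff.mpr ⟨K.trans' hij1 hjk1, K.trans' hij2 hjk2⟩
  | PB4 i j hi hj hij =>
      simp only [map_mul, FreeMonoid.lift_eval_of]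
      apply Subtype.ext
      show mulB (eps (PM.neg i) i) (eps (PM.neg j) j) = mulB (eps (PM.neg i) j) (eps i j)
      have hB1 := isBPart_eps (ne_of_lt (PM.neg_lt_self hi))
      have hB2 := isBPart_eps (ne_of_lt (PM.neg_lt_self hj))
      have hB3 := isBPart_eps (ne_of_lt (PM.neg_lt_pos hi hj))
      have hB4 := isBPart_eps (ne_of_lt hij)
      apply le_antisymm
      · apply (mulB_isLeast hB1 hB2).2
        set K := mulB (eps (PM.neg i) j) (eps i j) with hKdef
        obtain ⟨hni_j, hK2⟩ := eps_le_iff.mp (mulB_isLeast hB3 hB4).1.2.1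
        obtain ⟨hi_j, hni_nj⟩ := eps_le_iff.mp (mulB_isLeast hB3 hB4).1.2.2
        rw [PM.neg_neg] at hK2
        -- hni_j : K (-i) j ; hK2 : K i (-j) ; hi_j : K i j ; hni_nj : K (-i) (-j)
        have hnii : K (PM.neg i) i := K.trans' hni_j (K.symm' hi_j)
        have hnjj : K (PM.neg j) j := K.trans' (K.symm' hK2) hi_j
        refine ⟨isBPart_mulB hB3 hB4, eps_le_iff.mpr ⟨hnii, ?_⟩, eps_le_iff.mpr ⟨hnjj, ?_⟩⟩
        · rw [PM.neg_neg]
          exact K.symm' hnii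
        · rw [PM.neg_neg]
          exact K.symm' hnjj
      · apply (mulB_isLeast hB3 hB4).2
        set K := mulB (eps (PM.neg i) i) (eps (PM.neg j) j) with hKdef
        obtain ⟨ha1, ha2⟩ := eps_le_iff.mp (mulB_isLeast hB1 hB2).1.2.1
        obtain ⟨hb1, hb2⟩ := eps_le_iff.mp (mulB_isLeast hB1 hB2).1.2.2
        rw [PM.neg_neg] at ha2 hb2
        have ha3 : K (PM.neg i) (PM.neg (PM.neg i)) := by rw [PM.neg_neg]; exact ha1
        have hb3 : K (PM.neg j) (PM.neg (PM.neg j)) := by rw [PM.neg_neg]; exact hb1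
        have hz : ZProp (Bclose (eps (PM.neg i) i ⊔ eps (PM.neg j) j)) :=
          zprop_Bclose (isSigned_sup (isSigned_eps _ _) (isSigned_eps _ _))
        refine ⟨isBPart_mulB hB1 hB2, eps_le_iff.mpr ⟨?_, ?_⟩, eps_le_iff.mpr ⟨?_, ?_⟩⟩
        · exact hz (PM.neg i) j ha3 hb2
        · rw [PM.neg_neg]
          exact hz i (PM.neg j) ha2 hb3
        · exact hz i j ha2 hb2
        · exact hz (PM.neg i) (PM.neg j) ha3 hb3
  | PB5 i j hij =>
      apply Subtype.ext
      show eps i j = eps (PM.neg j) (PM.neg i)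
      show eps i j = mu (PM.neg (PM.neg i)) (PM.neg (PM.neg j)) ⊔ mu (PM.neg j) (PM.neg i)
      rw [PM.neg_neg, PM.neg_neg, sup_comm]
      rfl

end Hom
section PMon

variable {n : ℕ}

/-- The induced homomorphism from the presented monoid to `Bₙ`-partitions. -/
def Fhom : PresentedMonoid (BRel n) →* BP n := PresentedMonoid.lift fBP rels_hold

/-- The underlying set partition. -/
def Fval (x : PresentedMonoid (BRel n)) : Setoid (PM n) := (Fhom x).1

theorem Fval_isBPart (x : PresentedMonoid (BRel n)) : IsBPart (Fval x) := (Fhom x).2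

theorem mk_mul_eq (u v : FreeMonoid (BGen n)) :
    PresentedMonoid.mk (BRel n) (u * v) =
      PresentedMonoid.mk (BRel n) u * PresentedMonoid.mk (BRel n) v := rfl

theorem Fval_mk (w : FreeMonoid (BGen n)) :
    Fval (PresentedMonoid.mk (BRel n) w) = Bclose (Sword w) := by
  induction w using FreeMonoid.inductionOn' with
  | one =>
      show (Fhom (PresentedMonoid.mk (BRel n) 1)).1 = _
      rw [map_one, map_one, Sword_one, Bclose_eq_self isBPart_bot]
      rfl
  | of_mul a w ih =>
      show (Fhom (PresentedMonoid.mk (BRel n) (FreeMonoid.of a * w))).1 = _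
      rw [mk_mul_eq, map_mul]
      show mulB (epsG a) (Fval (PresentedMonoid.mk (BRel n) w)) = _
      rw [ih, Sword_cons]
      exact Bclose_sup_Bclose_right (isSigned_eps _ _) (isSigned_Sword w)

/-- Relations become equalities in the presented monoid. -/
theorem rel_eq {a b : FreeMonoid (BGen n)} (h : BRel n a b) :
    PresentedMonoid.mk (BRel n) a = PresentedMonoid.mk (BRel n) b :=
  Quot.sound (ConGen.Rel.of a b h)

theorem of_comm (a b : BGen n) :
    PresentedMonoid.of (BRel n) a * PresentedMonoid.of (BRel n) b =
      PresentedMonoid.of (BRel n) b * PresentedMonoid.of (BRel n) a :=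
  rel_eq (BRel.PB2 a b)

theorem of_sq (a : BGen n) :
    PresentedMonoid.of (BRel n) a * PresentedMonoid.of (BRel n) a =
      PresentedMonoid.of (BRel n) a :=
  rel_eq (BRel.PB1 a)

instance PMonCommMonoid (n : ℕ) : CommMonoid (PresentedMonoid (BRel n)) :=
  { (inferInstance : Monoid (PresentedMonoid (BRel n))) with
    mul_comm := by
      have hof : ∀ (a : BGen n) (y : PresentedMonoid (BRel n)),
          PresentedMonoid.of (BRel n) a * y = y * PresentedMonoid.of (BRel n) a := by
        intro a y
        induction y using PresentedMonoid.inductionOn with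
        | _ w =>
          induction w using FreeMonoid.inductionOn' with
          | one => rw [map_one, mul_one, one_mul]
          | of_mul b w ih =>
              rw [mk_mul_eq]
              calc PresentedMonoid.of (BRel n) a *
                    (PresentedMonoid.mk (BRel n) (FreeMonoid.of b) * PresentedMonoid.mk (BRel n) w)
                  = (PresentedMonoid.of (BRel n) a * PresentedMonoid.of (BRel n) b) *
                      PresentedMonoid.mk (BRel n) w := (mul_assoc _ _ _).symm
                _ = (PresentedMonoid.of (BRel n) b * PresentedMonoid.of (BRel n) a) *
                      PresentedMonoid.mk (BRel n) w := by rw [of_comm]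
                _ = PresentedMonoid.of (BRel n) b *
                      (PresentedMonoid.of (BRel n) a * PresentedMonoid.mk (BRel n) w) :=
                    mul_assoc _ _ _
                _ = PresentedMonoid.of (BRel n) b *
                      (PresentedMonoid.mk (BRel n) w * PresentedMonoid.of (BRel n) a) := by
                    rw [ih]
                _ = (PresentedMonoid.of (BRel n) b * PresentedMonoid.mk (BRel n) w) *
                      PresentedMonoid.of (BRel n) a := (mul_assoc _ _ _).symm
      intro x y
      induction x using PresentedMonoid.inductionOn with
      | _ w =>
        induction w using FreeMonoid.inductionOn' with
        | one => rw [map_one, one_mul, mul_one]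
        | of_mul b w ih =>
            rw [mk_mul_eq]
            calc (PresentedMonoid.mk (BRel n) (FreeMonoid.of b) * PresentedMonoid.mk (BRel n) w) * y
                = PresentedMonoid.of (BRel n) b * (PresentedMonoid.mk (BRel n) w * y) :=
                  mul_assoc _ _ _
              _ = PresentedMonoid.of (BRel n) b * (y * PresentedMonoid.mk (BRel n) w) := by rw [ih]
              _ = (PresentedMonoid.of (BRel n) b * y) * PresentedMonoid.mk (BRel n) w :=
                  (mul_assoc _ _ _).symm
              _ = (y * PresentedMonoid.of (BRel n) b) * PresentedMonoid.mk (BRel n) w := by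
                  rw [hof b y]
              _ = y * (PresentedMonoid.of (BRel n) b * PresentedMonoid.mk (BRel n) w) :=
                  mul_assoc _ _ _ }

/-- The generator associated to an unordered pair, `1` on the diagonal. -/
noncomputable def Egen (i j : PM n) : PresentedMonoid (BRel n) :=
  if h : i < j then PresentedMonoid.of (BRel n) ⟨(i, j), h⟩
  else if h : j < i then PresentedMonoid.of (BRel n) ⟨(j, i), h⟩ else 1

theorem Egen_eq {i j : PM n} (h : i < j) :
    Egen i j = PresentedMonoid.of (BRel n) ⟨(i, j), h⟩ := dif_pos h

theorem Egen_eq' {i j : PM n} (h : j < i) :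
    Egen i j = PresentedMonoid.of (BRel n) ⟨(j, i), h⟩ := by
  unfold Egen
  rw [dif_neg (asymm h), dif_pos h]

theorem Egen_self (i : PM n) : Egen i i = 1 := by
  unfold Egen
  rw [dif_neg (lt_irrefl i), dif_neg (lt_irrefl i)]

theorem Egen_symm (i j : PM n) : Egen i j = Egen j i := by
  rcases lt_trichotomy i j with h | rfl | h
  · rw [Egen_eq h, Egen_eq' h]
  · rfl
  · rw [Egen_eq' h, Egen_eq h]

theorem of_PB5 {i j : PM n} (h : i < j) :
    PresentedMonoid.of (BRel n) ⟨(i, j), h⟩ =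
      PresentedMonoid.of (BRel n) ⟨(PM.neg j, PM.neg i), PM.neg_lt_neg h⟩ :=
  rel_eq (BRel.PB5 i j h)

theorem Egen_neg (i j : PM n) : Egen (PM.neg i) (PM.neg j) = Egen i j := by
  rcases lt_trichotomy i j with h | rfl | h
  · rw [Egen_eq h, Egen_eq' (PM.neg_lt_neg h)]
    exact (of_PB5 h).symm
  · rw [Egen_self, Egen_self]
  · rw [Egen_eq' h, Egen_eq (PM.neg_lt_neg h)]
    exact (of_PB5 h).symm

theorem Egen_idem (i j : PM n) : Egen i j * Egen i j = Egen i j := by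
  rcases lt_trichotomy i j with h | rfl | h
  · rw [Egen_eq h]; exact of_sq _
  · rw [Egen_self]; exact one_mul 1
  · rw [Egen_eq' h]; exact of_sq _

theorem EgenA {p q r : PM n} (hpq : p < q) (hqr : q < r) :
    Egen p q * Egen q r = Egen p q * Egen p r := by
  rw [Egen_eq hpq, Egen_eq hqr, Egen_eq (hpq.trans hqr)]
  exact rel_eq (BRel.PB3a p q r hpq hqr)

theorem EgenB {p q r : PM n} (hpq : p < q) (hqr : q < r) :
    Egen p q * Egen q r = Egen p r * Egen q r := by
  rw [Egen_eq hpq, Egen_eq hqr, Egen_eq (hpq.trans hqr)]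
  exact rel_eq (BRel.PB3b p q r hpq hqr)

theorem Egen_rot {i j k : PM n} (hij : i ≠ j) (hjk : j ≠ k) (hik : i ≠ k) :
    Egen i j * Egen j k = Egen i j * Egen i k := by
  rcases lt_trichotomy i j with h1 | h1 | h1
  · rcases lt_trichotomy j k with h2 | h2 | h2
    · -- i < j < k
      exact EgenA h1 h2
    · exact absurd h2 hjk
    · -- i < j, k < j
      rcases lt_trichotomy i k with h3 | h3 | h3
      · -- i < k < j
        rw [Egen_symm j k]
        calc Egen i j * Egen k j = Egen i k * Egen k j := (EgenB h3 h2).symm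
          _ = Egen i k * Egen i j := EgenA h3 h2
          _ = Egen i j * Egen i k := mul_comm _ _
      · exact absurd h3 hik
      · -- k < i < j
        rw [Egen_symm j k, Egen_symm i k]
        calc Egen i j * Egen k j = Egen k j * Egen i j := mul_comm _ _
          _ = Egen k i * Egen i j := (EgenB h3 h1).symm
          _ = Egen i j * Egen k i := mul_comm _ _
  · exact absurd h1 hij
  · rcases lt_trichotomy j k with h2 | h2 | h2
    · -- j < i, j < k
      rcases lt_trichotomy i k with h3 | h3 | h3
      · -- j < i < k
        rw [Egen_symm i j]
        exact (EgenA h1 h3).symm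
      · exact absurd h3 hik
      · -- j < k < i
        rw [Egen_symm i j, Egen_symm i k]
        calc Egen j i * Egen j k = Egen j k * Egen j i := mul_comm _ _
          _ = Egen j k * Egen k i := (EgenA h2 h3).symm
          _ = Egen j i * Egen k i := EgenB h2 h3
    · exact absurd h2 hjk
    · -- k < j < i
      rw [Egen_symm i j, Egen_symm j k, Egen_symm i k]
      calc Egen j i * Egen k j = Egen k j * Egen j i := mul_comm _ _
        _ = Egen k i * Egen j i := EgenB h2 h1
        _ = Egen j i * Egen k i := mul_comm _ _

theorem Egen_triangle {i j k : PM n} (hij : i ≠ j) (hjk : j ≠ k) (hik : i ≠ k) :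
    Egen i j * Egen j k * Egen i k = Egen i j * Egen j k := by
  rw [Egen_rot hij hjk hik, mul_assoc, Egen_idem]

end PMon
section Absorb

variable {n : ℕ}

theorem absorb_trans {x y z : PM n} (W : PresentedMonoid (BRel n))
    (hxy : x ≠ y) (hyz : y ≠ z) (hxz : x ≠ z)
    (h1 : W * Egen x y = W) (h2 : W * Egen y z = W) : W * Egen x z = W := by
  have h12 : W * (Egen x y * Egen y z) = W := by rw [← mul_assoc, h1, h2]
  calc W * Egen x z = W * (Egen x y * Egen y z) * Egen x z := by rw [h12]
    _ = W * (Egen x y * Egen y z * Egen x z) := by rw [mul_assoc]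
    _ = W * (Egen x y * Egen y z) := by rw [Egen_triangle hxy hyz hxz]
    _ = W := h12

theorem absorb_mk_S (w : FreeMonoid (BGen n)) :
    ∀ i j : PM n, Sword w i j → i = j ∨
      PresentedMonoid.mk (BRel n) w * Egen i j = PresentedMonoid.mk (BRel n) w := by
  induction w using FreeMonoid.inductionOn' with
  | one =>
      intro i j h
      rw [Sword_one] at h
      simp only [Setoid.bot_def] at h
      exact Or.inl h
  | of_mul a w ihw =>
      intro i j h
      rw [Sword_cons, Setoid.sup_eq_eqvGen] at h
      have h' : Relation.EqvGen (fun x y => epsG a x y ∨ Sword w x y) i j := h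
      clear h
      induction h' with
      | rel x y hxy =>
          rcases hxy with he | hs
          · by_cases hxy' : x = y
            · exact Or.inl hxy'
            right
            rcases (eps_iff (ne_of_lt a.2) x y).mp he with h | ⟨h1, h2⟩ | ⟨h1, h2⟩
            · exact absurd h hxy'
            · have hE : Egen x y = Egen a.1.1 a.1.2 := by
                rcases h1 with rfl | rfl <;> rcases h2 with rfl | rfl
                · exact absurd rfl hxy'
                · rfl
                · exact Egen_symm _ _
                · exact absurd rfl hxy'
              rw [hE, Egen_eq a.2]
              show (PresentedMonoid.of (BRel n) a * PresentedMonoid.mk (BRel n) w) *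
                  PresentedMonoid.of (BRel n) ⟨(a.1.1, a.1.2), a.2⟩ = _
              rw [mul_right_comm]
              show (PresentedMonoid.of (BRel n) a * PresentedMonoid.of (BRel n) a) *
                  PresentedMonoid.mk (BRel n) w = _
              rw [of_sq]
              rfl
            · have hE : Egen x y = Egen a.1.1 a.1.2 := by
                rcases h1 with rfl | rfl <;> rcases h2 with rfl | rfl
                · exact absurd rfl hxy'
                · exact Egen_neg _ _
                · rw [Egen_symm]; exact Egen_neg _ _
                · exact absurd rfl hxy'
              rw [hE, Egen_eq a.2]
              show (PresentedMonoid.of (BRel n) a * PresentedMonoid.mk (BRel n) w) *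
                  PresentedMonoid.of (BRel n) ⟨(a.1.1, a.1.2), a.2⟩ = _
              rw [mul_right_comm]
              show (PresentedMonoid.of (BRel n) a * PresentedMonoid.of (BRel n) a) *
                  PresentedMonoid.mk (BRel n) w = _
              rw [of_sq]
              rfl
          · rcases ihw x y hs with rfl | habs
            · exact Or.inl rfl
            right
            show (PresentedMonoid.of (BRel n) a * PresentedMonoid.mk (BRel n) w) * Egen x y = _
            rw [mul_assoc, habs]
            rfl
      | refl x => exact Or.inl rfl
      | symm x y _ ih =>
          rcases ih with rfl | h'
          · exact Or.inl rfl
          · right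
            rwa [Egen_symm]
      | trans x y z _ _ ih1 ih2 =>
          by_cases hxy : x = y
          · subst hxy; exact ih2
          by_cases hyz : y = z
          · subst hyz; exact ih1
          by_cases hxz : x = z
          · exact Or.inl hxz
          rcases ih1 with h | h1'
          · exact absurd h hxy
          rcases ih2 with h | h2'
          · exact absurd h hyz
          exact Or.inr (absorb_trans _ hxy hyz hxz h1' h2')

theorem of_PB4 {i j : PM n} (hi : 0 < i.1) (hj : 0 < j.1) (hij : i < j) :
    PresentedMonoid.of (BRel n) ⟨(PM.neg i, i), PM.neg_lt_self hi⟩ *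
        PresentedMonoid.of (BRel n) ⟨(PM.neg j, j), PM.neg_lt_self hj⟩ =
      PresentedMonoid.of (BRel n) ⟨(PM.neg i, j), PM.neg_lt_pos hi hj⟩ *
        PresentedMonoid.of (BRel n) ⟨(i, j), hij⟩ :=
  rel_eq (BRel.PB4 i j hi hj hij)

theorem pb4_absorb (x : PresentedMonoid (BRel n)) (p q : PM n)
    (hp : 0 < p.1) (hq : 0 < q.1) (hpq : p < q)
    (h1 : x * Egen (PM.neg p) p = x) (h2 : x * Egen (PM.neg q) q = x)
    (u v : PM n) (hu : u = p ∨ u = PM.neg p) (hv : v = q ∨ v = PM.neg q) :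
    x * Egen u v = x := by
  have hAB : x * (Egen (PM.neg p) p * Egen (PM.neg q) q) = x := by
    rw [← mul_assoc, h1, h2]
  have hPB4 : Egen (PM.neg p) p * Egen (PM.neg q) q = Egen (PM.neg p) q * Egen p q := by
    rw [Egen_eq (PM.neg_lt_self hp), Egen_eq (PM.neg_lt_self hq),
      Egen_eq (PM.neg_lt_pos hp hq), Egen_eq hpq]
    exact of_PB4 hp hq hpq
  rw [hPB4] at hAB
  have habs : ∀ g : PresentedMonoid (BRel n),
      g = Egen (PM.neg p) q ∨ g = Egen p q → x * g = x := by
    rintro g (rfl | rfl)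
    · calc x * Egen (PM.neg p) q
          = x * (Egen (PM.neg p) q * Egen p q) * Egen (PM.neg p) q := by rw [hAB]
        _ = x * (Egen (PM.neg p) q * Egen p q * Egen (PM.neg p) q) := by rw [mul_assoc]
        _ = x * (Egen (PM.neg p) q * Egen (PM.neg p) q * Egen p q) := by
            rw [mul_right_comm]
        _ = x * (Egen (PM.neg p) q * Egen p q) := by rw [Egen_idem]
        _ = x := hAB
    · calc x * Egen p q
          = x * (Egen (PM.neg p) q * Egen p q) * Egen p q := by rw [hAB]
        _ = x * (Egen (PM.neg p) q * Egen p q * Egen p q) := by rw [mul_assoc]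
        _ = x * (Egen (PM.neg p) q * (Egen p q * Egen p q)) := by rw [mul_assoc]
        _ = x * (Egen (PM.neg p) q * Egen p q) := by rw [Egen_idem]
        _ = x := hAB
  apply habs
  have e1 : Egen p (PM.neg q) = Egen (PM.neg p) q := by
    have : Egen p (PM.neg q) = Egen (PM.neg (PM.neg p)) (PM.neg q) := by rw [PM.neg_neg]
    rw [this, Egen_neg]
  rcases hu with hu | hu <;> rcases hv with hv | hv
  · right; rw [hu, hv]
  · left; rw [hu, hv, e1]
  · left; rw [hu, hv]
  · right; rw [hu, hv, Egen_neg]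

theorem absorb_mk (w : FreeMonoid (BGen n)) (i j : PM n) (hij : i ≠ j)
    (h : Bclose (Sword w) i j) :
    PresentedMonoid.mk (BRel n) w * Egen i j = PresentedMonoid.mk (BRel n) w := by
  have hS : IsSigned (Sword w) := isSigned_Sword w
  rw [Bclose_rel hS] at h
  rcases h with h | ⟨h1, h2⟩
  · rcases absorb_mk_S w i j h with heq | h'
    · exact absurd heq hij
    · exact h'
  · have hA : PresentedMonoid.mk (BRel n) w * Egen i (PM.neg i) =
        PresentedMonoid.mk (BRel n) w := by
      rcases absorb_mk_S w i (PM.neg i) h1 with heq | h'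
      · exact absurd heq.symm (PM.neg_ne_self i)
      · exact h'
    have hB : PresentedMonoid.mk (BRel n) w * Egen j (PM.neg j) =
        PresentedMonoid.mk (BRel n) w := by
      rcases absorb_mk_S w j (PM.neg j) h2 with heq | h'
      · exact absurd heq.symm (PM.neg_ne_self j)
      · exact h'
    by_cases hji : j = PM.neg i
    · subst hji
      exact hA
    · set p := PM.abs i with hpdef
      set q := PM.abs j with hqdef
      have hp : 0 < p.1 := PM.abs_pos' i
      have hq : 0 < q.1 := PM.abs_pos' j
      have hip : i = p ∨ i = PM.neg p := by
        rcases lt_or_gt_of_ne i.2.1 with h | h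
        · right
          apply Subtype.ext
          show i.1 = -(PM.abs i).1
          rw [PM.abs_val, abs_of_neg h]
          ring
        · left
          apply Subtype.ext
          show i.1 = (PM.abs i).1
          rw [PM.abs_val, abs_of_pos h]
      have hjq : j = q ∨ j = PM.neg q := by
        rcases lt_or_gt_of_ne j.2.1 with h | h
        · right
          apply Subtype.ext
          show j.1 = -(PM.abs j).1
          rw [PM.abs_val, abs_of_neg h]
          ring
        · left
          apply Subtype.ext
          show j.1 = (PM.abs j).1
          rw [PM.abs_val, abs_of_pos h]
      have hA' : PresentedMonoid.mk (BRel n) w * Egen (PM.neg p) p =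
          PresentedMonoid.mk (BRel n) w := by
        have hE : Egen i (PM.neg i) = Egen (PM.neg p) p := by
          rcases hip with hh | hh
          · rw [hh]; exact Egen_symm _ _
          · rw [hh, PM.neg_neg]
        rw [← hE]
        exact hA
      have hB' : PresentedMonoid.mk (BRel n) w * Egen (PM.neg q) q =
          PresentedMonoid.mk (BRel n) w := by
        have hE : Egen j (PM.neg j) = Egen (PM.neg q) q := by
          rcases hjq with hh | hh
          · rw [hh]; exact Egen_symm _ _
          · rw [hh, PM.neg_neg]
        rw [← hE]
        exact hB
      have hpq_ne : p ≠ q := by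
        intro hpq
        have habs : |i.1| = |j.1| := congrArg Subtype.val hpq
        rcases abs_eq_abs.mp habs with h | h
        · exact hij (Subtype.ext h)
        · refine hji (Subtype.ext ?_)
          show j.1 = -i.1
          omega
      rcases lt_or_gt_of_ne hpq_ne with hlt | hgt
      · exact pb4_absorb _ p q hp hq hlt hA' hB' i j hip hjq
      · rw [Egen_symm]
        exact pb4_absorb _ q p hq hp hgt hB' hA' j i hjq hip

theorem absorb (x : PresentedMonoid (BRel n)) (i j : PM n) (hij : i ≠ j)
    (h : Fval x i j) : x * Egen i j = x := by
  induction x using PresentedMonoid.inductionOn with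
  | _ w =>
      rw [Fval_mk] at h
      exact absorb_mk w i j hij h

end Absorb
section Norm

variable {n : ℕ}

instance PMFinite (n : ℕ) : Finite (PM n) := by
  have h : Set.Finite {k : ℤ | k ≠ 0 ∧ |k| ≤ (n : ℤ)} := by
    apply Set.Finite.subset (Set.finite_Icc (-(n : ℤ)) (n : ℤ))
    rintro k ⟨h1, h2⟩
    rw [Set.mem_Icc]
    rw [abs_le] at h2
    exact h2
  exact h.to_subtype

noncomputable def prodGens (I : Setoid (PM n)) : PresentedMonoid (BRel n) :=
  ∏ a ∈ (Set.toFinite {a : BGen n | epsG a ≤ I}).toFinset, PresentedMonoid.of (BRel n) a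

theorem mem_gensFinset {I : Setoid (PM n)} {a : BGen n} :
    a ∈ (Set.toFinite {a : BGen n | epsG a ≤ I}).toFinset ↔ epsG a ≤ I :=
  Set.Finite.mem_toFinset _

theorem absorb_prod (x : PresentedMonoid (BRel n)) (s : Finset (BGen n))
    (h : ∀ b ∈ s, x * PresentedMonoid.of (BRel n) b = x) :
    x * ∏ b ∈ s, PresentedMonoid.of (BRel n) b = x := by
  induction s using Finset.cons_induction with
  | empty => rw [Finset.prod_empty, mul_one]
  | cons b s hb ih =>
      rw [Finset.prod_cons, ← mul_assoc, h b (Finset.mem_cons_self b s)]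
      exact ih fun c hc => h c (Finset.mem_cons_of_mem hc)

theorem of_absorb_prodGens {I : Setoid (PM n)} {a : BGen n} (ha : epsG a ≤ I) :
    PresentedMonoid.of (BRel n) a * prodGens I = prodGens I := by
  have hmem : a ∈ (Set.toFinite {a : BGen n | epsG a ≤ I}).toFinset := mem_gensFinset.mpr ha
  unfold prodGens
  calc PresentedMonoid.of (BRel n) a *
        ∏ b ∈ (Set.toFinite {a : BGen n | epsG a ≤ I}).toFinset, PresentedMonoid.of (BRel n) b
      = PresentedMonoid.of (BRel n) a * (PresentedMonoid.of (BRel n) a *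
          ∏ b ∈ ((Set.toFinite {a : BGen n | epsG a ≤ I}).toFinset).erase a,
            PresentedMonoid.of (BRel n) b) := by
        rw [Finset.mul_prod_erase _ _ hmem]
    _ = (PresentedMonoid.of (BRel n) a * PresentedMonoid.of (BRel n) a) *
          ∏ b ∈ ((Set.toFinite {a : BGen n | epsG a ≤ I}).toFinset).erase a,
            PresentedMonoid.of (BRel n) b := (mul_assoc _ _ _).symm
    _ = PresentedMonoid.of (BRel n) a *
          ∏ b ∈ ((Set.toFinite {a : BGen n | epsG a ≤ I}).toFinset).erase a,
            PresentedMonoid.of (BRel n) b := by rw [of_sq]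
    _ = ∏ b ∈ (Set.toFinite {a : BGen n | epsG a ≤ I}).toFinset,
          PresentedMonoid.of (BRel n) b := Finset.mul_prod_erase _ _ hmem

theorem lemA (x : PresentedMonoid (BRel n)) :
    ∀ I : Setoid (PM n), IsBPart I → Fval x ≤ I → x * prodGens I = prodGens I := by
  induction x using PresentedMonoid.inductionOn with
  | _ w =>
      induction w using FreeMonoid.inductionOn' with
      | one =>
          intro I hI h
          rw [map_one, one_mul]
      | of_mul a w ih =>
          intro I hI h
          have hF : Fval (PresentedMonoid.mk (BRel n) (FreeMonoid.of a * w)) =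
              Bclose (epsG a ⊔ Sword w) := by
            rw [Fval_mk, Sword_cons]
          rw [hF] at h
          have ha : epsG a ≤ I :=
            le_trans (le_trans le_sup_left (le_Bclose _)) h
          have hw : Fval (PresentedMonoid.mk (BRel n) w) ≤ I := by
            rw [Fval_mk]
            exact le_trans (Bclose_mono le_sup_right) h
          show (PresentedMonoid.of (BRel n) a * PresentedMonoid.mk (BRel n) w) * prodGens I = _
          rw [mul_assoc, ih I hI hw, of_absorb_prodGens ha]

theorem lemB (x : PresentedMonoid (BRel n)) : x * prodGens (Fval x) = x := by
  apply absorb_prod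
  intro b hb
  rw [mem_gensFinset] at hb
  have h1 : Fval x b.1.1 b.1.2 := Setoid.le_def.mp hb (eps_rel_self _ _)
  have h2 := absorb x b.1.1 b.1.2 (ne_of_lt b.2) h1
  rwa [Egen_eq b.2] at h2

theorem norm_eq (x : PresentedMonoid (BRel n)) : prodGens (Fval x) = x :=
  (lemA x (Fval x) (Fval_isBPart x) le_rfl).symm.trans (lemB x)

theorem Fval_one : Fval (1 : PresentedMonoid (BRel n)) = ⊥ := by
  unfold Fval
  rw [map_one]
  rfl

theorem Fval_prod_isLeast (s : Finset (BGen n)) :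
    IsLeast {K | IsBPart K ∧ ∀ b ∈ s, epsG b ≤ K}
      (Fval (∏ b ∈ s, PresentedMonoid.of (BRel n) b)) := by
  induction s using Finset.cons_induction with
  | empty =>
      rw [Finset.prod_empty, Fval_one]
      constructor
      · exact ⟨isBPart_bot, fun b hb => absurd hb (Finset.notMem_empty b)⟩
      · rintro K ⟨hK, _⟩
        exact bot_le
  | cons b s hb ih =>
      rw [Finset.prod_cons]
      have key : Fval (PresentedMonoid.of (BRel n) b * ∏ c ∈ s, PresentedMonoid.of (BRel n) c) =
          mulB (epsG b) (Fval (∏ c ∈ s, PresentedMonoid.of (BRel n) c)) := by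
        unfold Fval
        rw [map_mul]
        rfl
      rw [key]
      have hBb := isBPart_eps (ne_of_lt b.2)
      have hBs := Fval_isBPart (∏ c ∈ s, PresentedMonoid.of (BRel n) c)
      constructor
      · refine ⟨isBPart_mulB hBb hBs, ?_⟩
        intro c hc
        rcases Finset.mem_cons.mp hc with rfl | hc
        · exact (mulB_isLeast hBb hBs).1.2.1
        · exact le_trans (ih.1.2 c hc) (mulB_isLeast hBb hBs).1.2.2
      · rintro K ⟨hK, hKb⟩
        exact (mulB_isLeast hBb hBs).2
          ⟨hK, hKb b (Finset.mem_cons_self b s),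
            ih.2 ⟨hK, fun c hc => hKb c (Finset.mem_cons_of_mem hc)⟩⟩

theorem Fval_prodGens {I : Setoid (PM n)} (hI : IsBPart I) : Fval (prodGens I) = I := by
  have h := Fval_prod_isLeast (n := n) (Set.toFinite {a : BGen n | epsG a ≤ I}).toFinset
  apply le_antisymm
  · exact h.2 ⟨hI, fun b hb => mem_gensFinset.mp hb⟩
  · apply Setoid.le_def.mpr
    intro u v huv
    by_cases huv' : u = v
    · subst huv'
      exact (Fval (prodGens I)).refl' u
    rcases lt_or_gt_of_ne huv' with hlt | hgt
    · have hmem : (⟨(u, v), hlt⟩ : BGen n) ∈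
          (Set.toFinite {a : BGen n | epsG a ≤ I}).toFinset := by
        rw [mem_gensFinset]
        exact eps_le_iff.mpr ⟨huv, (hI.1 u v).mp huv⟩
      have hle : epsG (⟨(u, v), hlt⟩ : BGen n) ≤ Fval (prodGens I) := h.1.2 _ hmem
      exact Setoid.le_def.mp hle (eps_rel_self u v)
    · have huv2 : I v u := I.symm' huv
      have hmem : (⟨(v, u), hgt⟩ : BGen n) ∈
          (Set.toFinite {a : BGen n | epsG a ≤ I}).toFinset := by
        rw [mem_gensFinset]
        exact eps_le_iff.mpr ⟨huv2, (hI.1 v u).mp huv2⟩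
      have hle : epsG (⟨(v, u), hgt⟩ : BGen n) ≤ Fval (prodGens I) := h.1.2 _ hmem
      exact (Fval (prodGens I)).symm' (Setoid.le_def.mp hle (eps_rel_self v u))

end Norm
/-- There is a bijection `F` from the monoid presented by the
generators `e_{i,j}` subject to (PB1)–(PB5) onto the set `Pₙᴮ` of `Bₙ`-partitions,
mapping the identity to `⊥` and each generator `e_{i,j}` to `ε_{i,j}`, and carrying
the product to the product `·_B` (the least common `Bₙ`-coarsening, which exists):
`F(x·y)` is the least `Bₙ`-partition coarser than both `F(x)` and `F(y)`. -/
theorem presentedMonoid_bijection_PnB (n : ℕ) (hn : 2 ≤ n) :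
    ∃ F : PresentedMonoid (BRel n) → Setoid (PM n),
      Function.Injective F ∧
      Set.range F = {I | IsBPart I} ∧
      F 1 = ⊥ ∧
      (∀ a : BGen n, F (PresentedMonoid.of (BRel n) a) = eps a.1.1 a.1.2) ∧
      ∀ x y : PresentedMonoid (BRel n),
        IsLeast {K | IsBPart K ∧ F x ≤ K ∧ F y ≤ K} (F (x * y)) := by
  refine ⟨Fval, ?_, ?_, ?_, ?_, ?_⟩
  · intro x y h
    rw [← norm_eq x, ← norm_eq y, h]
  · ext I
    simp only [Set.mem_range, Set.mem_setOf_eq]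
    constructor
    · rintro ⟨x, rfl⟩
      exact Fval_isBPart x
    · intro hI
      exact ⟨prodGens I, Fval_prodGens hI⟩
  · exact Fval_one
  · intro a
    rfl
  · intro x y
    have key : Fval (x * y) = mulB (Fval x) (Fval y) := by
      unfold Fval
      rw [map_mul]
      rfl
    rw [key]
    exact mulB_isLeast (Fval_isBPart x) (Fval_isBPart y)
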